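/- Let X ⊂ ℝ^d be relatively separated, s > d, and γ = 1 − d/s > 0. Then there exists a constant C > 0 such that for every A in the Jaffard class J_s: ‖A²‖_{J_s} ≤ C ‖A‖_{J_s}^{2−γ} ‖A‖_{B(ℓ²(X;H))}^{γ}. -/

import Mathlib

open scoped BigOperators

noncomputable section

abbrev E (d : ℕ) := EuclideanSpace ℝ (Fin d)

/-- `X ⊂ ℝ^d` is relatively separated: the number of points of `X` in any
translated unit cube is uniformly bounded. -/
def RelSep {d : ℕ} (X : Set (E d)) : Prop :=
  ∃ N : ℕ, ∀ x : E d,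
    (X ∩ {y | ∀ i, x i ≤ y i ∧ y i ≤ x i + 1}).Finite ∧
    (X ∩ {y | ∀ i, x i ≤ y i ∧ y i ≤ x i + 1}).ncard ≤ N

private lemma coord_le_norm {d : ℕ} (v : E d) (i : Fin d) : |v i| ≤ ‖v‖ := by
  rw [EuclideanSpace.norm_eq]
  rw [← Real.sqrt_sq_eq_abs]
  apply Real.sqrt_le_sqrt
  have : |v i|^2 ≤ ∑ j, ‖v j‖ ^ 2 := by
    refine Finset.single_le_sum (f := fun j => ‖v j‖^2) (fun j _ => by positivity) (Finset.mem_univ i) |>.trans_eq' ?_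
    simp [Real.norm_eq_abs, sq_abs]
  simpa [sq_abs] using this


private lemma cube_count {d : ℕ} {X : Set (E d)} {N : ℕ}
    (hN : ∀ x : E d, (X ∩ {y | ∀ i, x i ≤ y i ∧ y i ≤ x i + 1}).Finite ∧
      (X ∩ {y | ∀ i, x i ≤ y i ∧ y i ≤ x i + 1}).ncard ≤ N)
    (c : E d) (t : ℝ) (ht : 0 ≤ t) :
    (X ∩ {y | ∀ i, |y i - c i| ≤ t}).Finite ∧
    ((X ∩ {y | ∀ i, |y i - c i| ≤ t}).ncard : ℝ) ≤ (N : ℝ) * (2*t+2)^d := by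
  classical
  set m : ℕ := ⌊2*t⌋₊ + 1 with hm
  have hmpos : 0 < m := Nat.succ_pos _
  have hmle : (m : ℝ) ≤ 2*t+1 := by
    have := Nat.floor_le (by linarith : (0:ℝ) ≤ 2*t)
    push_cast [hm]; linarith
  -- index function
  set idx : E d → (Fin d → Fin m) := fun y i => ⟨min (⌊y i - (c i - t)⌋₊) (m-1), by
    have : m - 1 < m := Nat.sub_lt hmpos one_pos
    exact lt_of_le_of_lt (min_le_right _ _) this⟩ with hidx
  set cube : (Fin d → Fin m) → Set (E d) := fun j =>
    {y | ∀ i, (fun i => c i - t + (j i : ℕ)) i ≤ y i ∧ y i ≤ (fun i => c i - t + (j i : ℕ)) i + 1}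
    with hcube
  have hcj : ∀ j, (X ∩ cube j).Finite ∧ (X ∩ cube j).ncard ≤ N :=
    fun j => hN (WithLp.toLp 2 (fun i => c i - t + ((j i : ℕ) : ℝ)))
  have key : ∀ y ∈ X ∩ {y | ∀ i, |y i - c i| ≤ t}, y ∈ X ∩ cube (idx y) := by
    rintro y ⟨hyX, hyc⟩
    refine ⟨hyX, fun i => ?_⟩
    have h1 : 0 ≤ y i - (c i - t) := by have := abs_le.1 (hyc i); linarith [this.2]
    have h2 : y i - (c i - t) ≤ 2*t := by have := abs_le.1 (hyc i); linarith [this.1]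
    have hfl : ⌊y i - (c i - t)⌋₊ ≤ m - 1 := by
      have : ⌊y i - (c i - t)⌋₊ ≤ ⌊2*t⌋₊ := Nat.floor_mono h2
      omega
    have hvn : (idx y i : ℕ) = ⌊y i - (c i - t)⌋₊ := min_eq_left hfl
    have hval : ((idx y i : ℕ) : ℝ) = (⌊y i - (c i - t)⌋₊ : ℝ) := by exact_mod_cast hvn
    constructor
    · have := Nat.floor_le h1
      simp only [hval]; linarith
    · have := Nat.lt_floor_add_one (y i - (c i - t))
      simp only [hval]; push_cast; linarith
  have hsub : X ∩ {y | ∀ i, |y i - c i| ≤ t} ⊆ ⋃ j : Fin d → Fin m, (X ∩ cube j) := by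
    intro y hy; exact Set.mem_iUnion.2 ⟨idx y, key y hy⟩
  have hfin : (X ∩ {y | ∀ i, |y i - c i| ≤ t}).Finite := by
    refine Set.Finite.subset (Set.finite_iUnion fun j => (hcj j).1) hsub
  refine ⟨hfin, ?_⟩
  -- card bound via fiberwise count
  set F := hfin.toFinset with hF
  have hcard : F.card = ∑ j : Fin d → Fin m, (F.filter (fun y => idx y = j)).card :=
    Finset.card_eq_sum_card_fiberwise (fun y _ => Finset.mem_univ _)
  have hfib : ∀ j, (F.filter (fun y => idx y = j)).card ≤ N := by
    intro j
    have hsub2 : ((F.filter (fun y => idx y = j) : Finset (E d)) : Set (E d)) ⊆ X ∩ cube j := by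
      intro y hy
      simp only [Finset.coe_filter, Set.mem_setOf_eq, hF, Set.Finite.mem_toFinset] at hy
      obtain ⟨hy1, rfl⟩ := hy
      exact key y hy1
    have := Set.ncard_le_ncard hsub2 (hcj j).1
    rw [Set.ncard_coe_finset] at this
    exact this.trans (hcj j).2
  have hcardN : F.card ≤ m^d * N := by
    rw [hcard]
    calc ∑ j : Fin d → Fin m, (F.filter (fun y => idx y = j)).card
        ≤ ∑ _j : Fin d → Fin m, N := Finset.sum_le_sum fun j _ => hfib j
      _ = m^d * N := by simp [Finset.card_univ, mul_comm]
  have hnc : (X ∩ {y | ∀ i, |y i - c i| ≤ t}).ncard = F.card := by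
    rw [hF, ← Set.ncard_coe_finset, Set.Finite.coe_toFinset]
  rw [hnc]
  calc (F.card : ℝ) ≤ (m:ℝ)^d * N := by exact_mod_cast hcardN
    _ ≤ (2*t+2)^d * N := by
        have h1 : (m:ℝ)^d ≤ (2*t+2)^d := pow_le_pow_left₀ (by positivity) (by linarith) d
        exact mul_le_mul_of_nonneg_right h1 (Nat.cast_nonneg N)
    _ = (N:ℝ) * (2*t+2)^d := by ring

private lemma ball_count {d : ℕ} {X : Set (E d)} {N : ℕ}
    (hN : ∀ x : E d, (X ∩ {y | ∀ i, x i ≤ y i ∧ y i ≤ x i + 1}).Finite ∧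
      (X ∩ {y | ∀ i, x i ≤ y i ∧ y i ≤ x i + 1}).ncard ≤ N)
    (c : E d) (r : ℝ) (hr : 0 ≤ r) :
    {n : X | ‖(n : E d) - c‖ ≤ r}.Finite ∧
    (({n : X | ‖(n : E d) - c‖ ≤ r}).ncard : ℝ) ≤ (N : ℝ) * (2*r+2)^d := by
  have hsub : (Subtype.val '' {n : X | ‖(n : E d) - c‖ ≤ r}) ⊆
      X ∩ {y | ∀ i, |y i - c i| ≤ r} := by
    rintro y ⟨n, hn, rfl⟩
    refine ⟨n.2, fun i => ?_⟩
    have h := (coord_le_norm ((n : E d) - c) i).trans hn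
    simpa using h
  have hfin' := (cube_count hN c r hr).1.subset hsub
  have hfin : {n : X | ‖(n : E d) - c‖ ≤ r}.Finite :=
    Set.Finite.of_finite_image hfin' (Subtype.val_injective.injOn)
  refine ⟨hfin, ?_⟩
  have h1 : {n : X | ‖(n : E d) - c‖ ≤ r}.ncard
      = (Subtype.val '' {n : X | ‖(n : E d) - c‖ ≤ r}).ncard :=
    (Set.ncard_image_of_injective _ Subtype.val_injective).symm
  rw [h1]
  exact (Nat.cast_le.2 (Set.ncard_le_ncard hsub (cube_count hN c r hr).1)).trans
    (cube_count hN c r hr).2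

private lemma tail_sum {d : ℕ} {X : Set (E d)} {N : ℕ}
    (hN : ∀ x : E d, (X ∩ {y | ∀ i, x i ≤ y i ∧ y i ≤ x i + 1}).Finite ∧
      (X ∩ {y | ∀ i, x i ≤ y i ∧ y i ≤ x i + 1}).ncard ≤ N)
    {s : ℝ} (hs : (d : ℝ) < s) (c : E d) (a : ℝ) (ha : 1 ≤ a)
    (u : Finset X) (hu : ∀ n ∈ u, a ≤ 1 + ‖(n : E d) - c‖) :
    ∑ n ∈ u, (1 + ‖(n : E d) - c‖) ^ (-s)
      ≤ (N : ℝ) * 8 ^ (d:ℝ) * (1 - (2:ℝ) ^ ((d:ℝ) - s))⁻¹ * a ^ ((d:ℝ) - s) := by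
  classical
  have ha0 : 0 < a := lt_of_lt_of_le one_pos ha
  set q : ℝ := (2:ℝ) ^ ((d:ℝ) - s) with hq
  have hq0 : 0 < q := Real.rpow_pos_of_pos two_pos _
  have hq1 : q < 1 := Real.rpow_lt_one_of_one_lt_of_neg one_lt_two (by linarith)
  have hqinv : 0 < (1 - q)⁻¹ := inv_pos.2 (by linarith)
  set φ : X → ℕ := fun n => ⌊Real.logb 2 ((1 + ‖(n : E d) - c‖)/a)⌋₊ with hφ
  -- basic facts for n ∈ u
  have hlo : ∀ n ∈ u, a * 2 ^ (φ n : ℝ) ≤ 1 + ‖(n : E d) - c‖ := by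
    intro n hn
    have hv1 : 1 ≤ (1 + ‖(n : E d) - c‖)/a := (one_le_div ha0).2 (hu n hn)
    have hv0 : 0 < (1 + ‖(n : E d) - c‖)/a := lt_of_lt_of_le one_pos hv1
    have hlogb : 0 ≤ Real.logb 2 ((1 + ‖(n : E d) - c‖)/a) :=
      Real.logb_nonneg one_lt_two hv1
    have h2 : (2:ℝ) ^ (φ n : ℝ) ≤ (1 + ‖(n : E d) - c‖)/a := by
      calc (2:ℝ) ^ (φ n : ℝ) ≤ (2:ℝ) ^ (Real.logb 2 ((1 + ‖(n : E d) - c‖)/a)) :=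
            Real.rpow_le_rpow_of_exponent_le one_le_two (Nat.floor_le hlogb)
        _ = (1 + ‖(n : E d) - c‖)/a := Real.rpow_logb two_pos (by norm_num) hv0
    calc a * 2 ^ (φ n : ℝ) ≤ a * ((1 + ‖(n : E d) - c‖)/a) := by
          exact mul_le_mul_of_nonneg_left h2 ha0.le
      _ = 1 + ‖(n : E d) - c‖ := by field_simp
  have hhi : ∀ n ∈ u, 1 + ‖(n : E d) - c‖ < a * 2 ^ ((φ n : ℝ) + 1) := by
    intro n hn
    have hv1 : 1 ≤ (1 + ‖(n : E d) - c‖)/a := (one_le_div ha0).2 (hu n hn)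
    have hv0 : 0 < (1 + ‖(n : E d) - c‖)/a := lt_of_lt_of_le one_pos hv1
    have h2 : (1 + ‖(n : E d) - c‖)/a < (2:ℝ) ^ ((φ n : ℝ) + 1) := by
      calc (1 + ‖(n : E d) - c‖)/a
          = (2:ℝ) ^ (Real.logb 2 ((1 + ‖(n : E d) - c‖)/a)) :=
            (Real.rpow_logb two_pos (by norm_num) hv0).symm
        _ < (2:ℝ) ^ ((φ n : ℝ) + 1) :=
            Real.rpow_lt_rpow_of_exponent_lt one_lt_two
              (Nat.lt_floor_add_one _)
    calc 1 + ‖(n : E d) - c‖ = a * ((1 + ‖(n : E d) - c‖)/a) := by field_simp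
      _ < a * 2 ^ ((φ n : ℝ) + 1) := by exact mul_lt_mul_of_pos_left h2 ha0
  set J : ℕ := u.sup φ with hJ
  have hmaps : ∀ n ∈ u, φ n ∈ Finset.range (J+1) := fun n hn =>
    Finset.mem_range.2 (Nat.lt_succ_of_le (Finset.le_sup hn))
  rw [← Finset.sum_fiberwise_of_maps_to hmaps]
  -- bound each fiber
  have hfiber : ∀ j ∈ Finset.range (J+1),
      ∑ n ∈ u.filter (fun n => φ n = j), (1 + ‖(n : E d) - c‖) ^ (-s)
        ≤ (N : ℝ) * 8 ^ (d:ℝ) * a ^ ((d:ℝ) - s) * q ^ j := by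
    intro j _
    have hb0 : (0:ℝ) < a * 2 ^ (j:ℝ) := by positivity
    have hterm : ∀ n ∈ u.filter (fun n => φ n = j),
        (1 + ‖(n : E d) - c‖) ^ (-s) ≤ (a * 2 ^ (j:ℝ)) ^ (-s) := by
      intro n hn
      rw [Finset.mem_filter] at hn
      have := hlo n hn.1
      rw [hn.2] at this
      exact Real.rpow_le_rpow_of_nonpos hb0 this (by linarith)
    have hcardle : ((u.filter (fun n => φ n = j)).card : ℝ)
        ≤ (N : ℝ) * (2*(a * 2 ^ ((j:ℝ)+1))+2)^d := by
      have hr0 : (0:ℝ) ≤ a * 2 ^ ((j:ℝ)+1) := by positivity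
      have hsub : ((u.filter (fun n => φ n = j) : Finset X) : Set X)
          ⊆ {n : X | ‖(n : E d) - c‖ ≤ a * 2 ^ ((j:ℝ)+1)} := by
        intro n hn
        simp only [Finset.coe_filter, Set.mem_setOf_eq] at hn ⊢
        have := hhi n hn.1
        rw [hn.2] at this
        linarith
      have h1 := Set.ncard_le_ncard hsub (ball_count hN c _ hr0).1
      rw [Set.ncard_coe_finset] at h1
      exact (Nat.cast_le.2 h1).trans (ball_count hN c _ hr0).2
    calc ∑ n ∈ u.filter (fun n => φ n = j), (1 + ‖(n : E d) - c‖) ^ (-s)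
        ≤ ∑ _n ∈ u.filter (fun n => φ n = j), (a * 2 ^ (j:ℝ)) ^ (-s) :=
          Finset.sum_le_sum hterm
      _ = ((u.filter (fun n => φ n = j)).card : ℝ) * (a * 2 ^ (j:ℝ)) ^ (-s) := by
          rw [Finset.sum_const, nsmul_eq_mul]
      _ ≤ ((N : ℝ) * (2*(a * 2 ^ ((j:ℝ)+1))+2)^d) * (a * 2 ^ (j:ℝ)) ^ (-s) := by
          exact mul_le_mul_of_nonneg_right hcardle (Real.rpow_nonneg hb0.le _)
      _ ≤ ((N : ℝ) * (8 * (a * 2 ^ (j:ℝ)))^d) * (a * 2 ^ (j:ℝ)) ^ (-s) := by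
          have h2 : (2:ℝ) ^ ((j:ℝ)+1) = 2 * 2 ^ (j:ℝ) := by
            rw [Real.rpow_add two_pos, Real.rpow_one]; ring
          have hj1 : (1:ℝ) ≤ 2 ^ (j:ℝ) :=
            Real.one_le_rpow one_le_two (Nat.cast_nonneg j)
          have hkey : 2*(a * 2 ^ ((j:ℝ)+1))+2 ≤ 8 * (a * 2 ^ (j:ℝ)) := by
            rw [h2]; nlinarith
          have := pow_le_pow_left₀ (by positivity) hkey d
          exact mul_le_mul_of_nonneg_right
            (mul_le_mul_of_nonneg_left this (Nat.cast_nonneg N))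
            (Real.rpow_nonneg hb0.le _)
      _ = (N : ℝ) * 8 ^ (d:ℝ) * a ^ ((d:ℝ) - s) * q ^ j := by
          have ht0 : (0:ℝ) < 2 ^ (j:ℝ) := Real.rpow_pos_of_pos two_pos _
          have hshell : ((8 * (a * 2 ^ (j:ℝ)))^(d:ℝ) : ℝ) * (a * 2 ^ (j:ℝ))^(-s)
              = 8^(d:ℝ) * (a^((d:ℝ)-s) * ((2:ℝ)^(j:ℝ))^((d:ℝ)-s)) := by
            rw [Real.mul_rpow (by norm_num) hb0.le, mul_assoc, ← Real.rpow_add hb0,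
              ← sub_eq_add_neg, Real.mul_rpow ha0.le ht0.le]
          have hqj : ((2:ℝ)^(j:ℝ))^((d:ℝ)-s) = q ^ j := by
            rw [← Real.rpow_natCast q j, hq, ← Real.rpow_mul two_pos.le,
              ← Real.rpow_mul two_pos.le, mul_comm]
          rw [← Real.rpow_natCast (8 * (a * 2 ^ (j:ℝ))) d, mul_assoc, hshell, hqj]
          ring
  calc ∑ j ∈ Finset.range (J+1), ∑ n ∈ u.filter (fun n => φ n = j),
        (1 + ‖(n : E d) - c‖) ^ (-s)
      ≤ ∑ j ∈ Finset.range (J+1), (N : ℝ) * 8 ^ (d:ℝ) * a ^ ((d:ℝ) - s) * q ^ j :=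
        Finset.sum_le_sum hfiber
    _ = (N : ℝ) * 8 ^ (d:ℝ) * a ^ ((d:ℝ) - s) * ∑ j ∈ Finset.range (J+1), q ^ j := by
        rw [Finset.mul_sum]
    _ ≤ (N : ℝ) * 8 ^ (d:ℝ) * a ^ ((d:ℝ) - s) * (1-q)⁻¹ := by
        have hgeom : ∑ j ∈ Finset.range (J+1), q ^ j ≤ (1-q)⁻¹ := by
          have := Summable.sum_le_tsum (Finset.range (J+1))
            (fun i _ => pow_nonneg hq0.le i) (summable_geometric_of_lt_one hq0.le hq1)
          rwa [tsum_geometric_of_lt_one hq0.le hq1] at this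
        have hc : (0:ℝ) ≤ (N : ℝ) * 8 ^ (d:ℝ) * a ^ ((d:ℝ) - s) := by positivity
        exact mul_le_mul_of_nonneg_left hgeom hc
    _ = (N : ℝ) * 8 ^ (d:ℝ) * (1 - q)⁻¹ * a ^ ((d:ℝ) - s) := by ring

private lemma min_sum {d : ℕ} {X : Set (E d)} {N : ℕ}
    (hN : ∀ x : E d, (X ∩ {y | ∀ i, x i ≤ y i ∧ y i ≤ x i + 1}).Finite ∧
      (X ∩ {y | ∀ i, x i ≤ y i ∧ y i ≤ x i + 1}).ncard ≤ N)
    {s : ℝ} (hs : (d : ℝ) < s) (c : E d) {K M : ℝ} (hK : 0 < K) (hM : 0 < M) :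
    Summable (fun n : X => min K (M * (1 + ‖(n : E d) - c‖) ^ (-s))) ∧
    ∑' n : X, min K (M * (1 + ‖(n : E d) - c‖) ^ (-s))
      ≤ ((N:ℝ) * 4^d + (N : ℝ) * 8 ^ (d:ℝ) * (1 - (2:ℝ) ^ ((d:ℝ) - s))⁻¹)
          * (M ^ ((d:ℝ)/s) * K ^ (1 - (d:ℝ)/s)) := by
  classical
  set w : X → ℝ := fun n => ‖(n : E d) - c‖ with hw
  have hs0 : 0 < s := lt_of_le_of_lt (Nat.cast_nonneg d) hs
  set τ : ℝ := (M/K) ^ (1/s) with hτ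
  have hτ0 : 0 < τ := Real.rpow_pos_of_pos (div_pos hM hK) _
  set R : ℝ := M ^ ((d:ℝ)/s) * K ^ (1 - (d:ℝ)/s) with hR
  have hR0 : 0 < R := mul_pos (Real.rpow_pos_of_pos hM _) (Real.rpow_pos_of_pos hK _)
  have hf0 : ∀ n : X, 0 ≤ min K (M * (1 + ‖(n : E d) - c‖) ^ (-s)) := by
    intro n
    have h1 : (0:ℝ) < 1 + ‖(n : E d) - c‖ := by positivity
    exact le_min hK.le (by positivity)
  -- near bound: min K M * (count near) and relation to R
  have hminKM : min K M * max 1 τ ^ (d:ℕ) ≤ R := by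
    rcases le_total τ 1 with h1 | h1
    · -- τ ≤ 1, so M ≤ K
      have hMK : M ≤ K := by
        have h2 : τ ^ s ≤ 1 := Real.rpow_le_one hτ0.le h1 hs0.le
        have h3 : τ ^ s = M / K := by
          rw [hτ, ← Real.rpow_mul (div_pos hM hK).le, one_div_mul_cancel hs0.ne',
            Real.rpow_one]
        rw [h3, div_le_one hK] at h2
        exact h2
      have hmax : max 1 τ = 1 := max_eq_left h1
      rw [hmax, one_pow, mul_one]
      have : M = M ^ ((d:ℝ)/s) * M ^ (1 - (d:ℝ)/s) := by
        rw [← Real.rpow_add hM]; norm_num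
      calc min K M ≤ M := min_le_right _ _
        _ = M ^ ((d:ℝ)/s) * M ^ (1 - (d:ℝ)/s) := this
        _ ≤ R := by
            rw [hR]
            exact mul_le_mul_of_nonneg_left
              (Real.rpow_le_rpow hM.le hMK (by
                rw [sub_nonneg]; exact (div_le_one hs0).2 hs.le)) (Real.rpow_nonneg hM.le _)
    · -- 1 ≤ τ, so K ≤ M and τ^d * K = R
      have hmax : max 1 τ = τ := max_eq_right h1
      rw [hmax]
      have hτd : τ ^ (d:ℕ) = (M/K) ^ ((d:ℝ)/s) := by
        rw [← Real.rpow_natCast τ d, hτ, ← Real.rpow_mul (div_pos hM hK).le]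
        congr 1; field_simp
      calc min K M * τ ^ (d:ℕ) ≤ K * τ ^ (d:ℕ) := by
            exact mul_le_mul_of_nonneg_right (min_le_left _ _) (by positivity)
        _ = R := by
            have hKa : (0:ℝ) < K ^ ((d:ℝ)/s) := Real.rpow_pos_of_pos hK _
            rw [hτd, Real.div_rpow hM.le hK.le, hR, Real.rpow_sub hK, Real.rpow_one]
            field_simp
  -- uniform bound on partial sums
  set Cb : ℝ := ((N:ℝ) * 4^d + (N : ℝ) * 8 ^ (d:ℝ) * (1 - (2:ℝ) ^ ((d:ℝ) - s))⁻¹) * R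
    with hCb
  have hbound : ∀ u : Finset X,
      ∑ n ∈ u, min K (M * (1 + ‖(n : E d) - c‖) ^ (-s)) ≤ Cb := by
    intro u
    rw [← Finset.sum_filter_add_sum_filter_not u (fun (n : X) => τ ≤ ‖(n : E d) - c‖)]
    have hfar : ∑ n ∈ u.filter (fun (n : X) => τ ≤ ‖(n : E d) - c‖),
        min K (M * (1 + ‖(n : E d) - c‖) ^ (-s))
        ≤ (N : ℝ) * 8 ^ (d:ℝ) * (1 - (2:ℝ) ^ ((d:ℝ) - s))⁻¹ * R := by
      have h1 : ∀ n ∈ u.filter (fun (n : X) => τ ≤ ‖(n : E d) - c‖),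
          min K (M * (1 + ‖(n : E d) - c‖) ^ (-s))
            ≤ M * (1 + ‖(n : E d) - c‖) ^ (-s) := fun n _ => min_le_right _ _
      have h2 := tail_sum hN hs c (1+τ) (by linarith)
        (u.filter (fun (n : X) => τ ≤ ‖(n : E d) - c‖)) (by
          intro n hn
          rw [Finset.mem_filter] at hn
          linarith [hn.2])
      have h3 : M * ((1+τ) ^ ((d:ℝ) - s)) ≤ R := by
        have h4 : ((1+τ) ^ ((d:ℝ) - s)) ≤ τ ^ ((d:ℝ) - s) :=
          Real.rpow_le_rpow_of_nonpos hτ0 (by linarith) (by linarith)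
        have h5 : M * τ ^ ((d:ℝ) - s) = R := by
          rw [hτ, ← Real.rpow_mul (div_pos hM hK).le, hR]
          have he : 1/s * ((d:ℝ) - s) = (d:ℝ)/s - 1 := by field_simp
          rw [he, Real.rpow_sub (div_pos hM hK), Real.rpow_one,
            Real.div_rpow hM.le hK.le]
          rw [Real.rpow_sub hK, Real.rpow_one]
          field_simp
        calc M * ((1+τ) ^ ((d:ℝ) - s)) ≤ M * τ ^ ((d:ℝ) - s) :=
              mul_le_mul_of_nonneg_left h4 hM.le
          _ = R := h5
      calc ∑ n ∈ u.filter (fun (n : X) => τ ≤ ‖(n : E d) - c‖),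
            min K (M * (1 + ‖(n : E d) - c‖) ^ (-s))
          ≤ ∑ n ∈ u.filter (fun (n : X) => τ ≤ ‖(n : E d) - c‖),
            M * (1 + ‖(n : E d) - c‖) ^ (-s) := Finset.sum_le_sum h1
        _ = M * ∑ n ∈ u.filter (fun (n : X) => τ ≤ ‖(n : E d) - c‖),
            (1 + ‖(n : E d) - c‖) ^ (-s) := by rw [Finset.mul_sum]
        _ ≤ M * ((N : ℝ) * 8 ^ (d:ℝ) * (1 - (2:ℝ) ^ ((d:ℝ) - s))⁻¹ * (1+τ) ^ ((d:ℝ) - s)) :=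
            mul_le_mul_of_nonneg_left h2 hM.le
        _ = (N : ℝ) * 8 ^ (d:ℝ) * (1 - (2:ℝ) ^ ((d:ℝ) - s))⁻¹ * (M * (1+τ) ^ ((d:ℝ) - s)) := by
            ring
        _ ≤ (N : ℝ) * 8 ^ (d:ℝ) * (1 - (2:ℝ) ^ ((d:ℝ) - s))⁻¹ * R := by
            have hq1 : (2:ℝ) ^ ((d:ℝ) - s) < 1 :=
              Real.rpow_lt_one_of_one_lt_of_neg one_lt_two (by linarith)
            have : (0:ℝ) ≤ (N : ℝ) * 8 ^ (d:ℝ) * (1 - (2:ℝ) ^ ((d:ℝ) - s))⁻¹ := by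
              have : (0:ℝ) ≤ (1 - (2:ℝ) ^ ((d:ℝ) - s))⁻¹ := by
                apply inv_nonneg.2; linarith
              positivity
            exact mul_le_mul_of_nonneg_left h3 this
    have hnear : ∑ n ∈ u.filter (fun (n : X) => ¬ τ ≤ ‖(n : E d) - c‖),
        min K (M * (1 + ‖(n : E d) - c‖) ^ (-s)) ≤ (N:ℝ) * 4^d * R := by
      have hcard : ((u.filter (fun (n : X) => ¬ τ ≤ ‖(n : E d) - c‖)).card : ℝ)
          ≤ (N : ℝ) * (2*τ+2)^d := by
        have hsub : ((u.filter (fun (n : X) => ¬ τ ≤ ‖(n : E d) - c‖) : Finset X) : Set X)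
            ⊆ {n : X | ‖(n : E d) - c‖ ≤ τ} := by
          intro n hn
          simp only [Finset.coe_filter, Set.mem_setOf_eq, not_le] at hn ⊢
          exact hn.2.le
        have h1 := Set.ncard_le_ncard hsub (ball_count hN c τ hτ0.le).1
        rw [Set.ncard_coe_finset] at h1
        exact (Nat.cast_le.2 h1).trans (ball_count hN c τ hτ0.le).2
      have hterm : ∀ n ∈ u.filter (fun (n : X) => ¬ τ ≤ ‖(n : E d) - c‖),
          min K (M * (1 + ‖(n : E d) - c‖) ^ (-s)) ≤ min K M := by
        intro n hn
        have h1 : (0:ℝ) ≤ ‖(n : E d) - c‖ := norm_nonneg _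
        refine min_le_min le_rfl ?_
        have h2 : (1 + ‖(n : E d) - c‖) ^ (-s) ≤ 1 := by
          apply Real.rpow_le_one_of_one_le_of_nonpos (by linarith) (by linarith)
        nlinarith
      have hminKM0 : 0 ≤ min K M := le_min hK.le hM.le
      calc ∑ n ∈ u.filter (fun (n : X) => ¬ τ ≤ ‖(n : E d) - c‖),
            min K (M * (1 + ‖(n : E d) - c‖) ^ (-s))
          ≤ ∑ _n ∈ u.filter (fun (n : X) => ¬ τ ≤ ‖(n : E d) - c‖), min K M :=
            Finset.sum_le_sum hterm
        _ = ((u.filter (fun (n : X) => ¬ τ ≤ ‖(n : E d) - c‖)).card : ℝ) * min K M := by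
            rw [Finset.sum_const, nsmul_eq_mul]
        _ ≤ (N : ℝ) * (2*τ+2)^d * min K M :=
            mul_le_mul_of_nonneg_right hcard hminKM0
        _ ≤ (N : ℝ) * (4 * max 1 τ)^d * min K M := by
            have hkey : 2*τ+2 ≤ 4 * max 1 τ := by
              rcases le_total τ 1 with h | h
              · rw [max_eq_left h]; linarith
              · rw [max_eq_right h]; linarith
            have := pow_le_pow_left₀ (by positivity) hkey d
            exact mul_le_mul_of_nonneg_right
              (mul_le_mul_of_nonneg_left this (Nat.cast_nonneg N)) hminKM0
        _ = (N:ℝ) * 4^d * (min K M * max 1 τ ^ (d:ℕ)) := by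
            rw [mul_pow]; ring
        _ ≤ (N:ℝ) * 4^d * R :=
            mul_le_mul_of_nonneg_left hminKM (by positivity)
    rw [hCb]
    linarith
  have hsummable : Summable (fun n : X => min K (M * (1 + ‖(n : E d) - c‖) ^ (-s))) :=
    summable_of_sum_le hf0 hbound
  exact ⟨hsummable, by
    have := Summable.tsum_le_of_sum_le hsummable hbound
    rw [hCb] at this
    exact this⟩

private lemma entry_bound {d : ℕ} {X : Set (E d)}
    {H : Type*} [NormedAddCommGroup H] [InnerProductSpace ℂ H] [CompleteSpace H]
    (A : X → X → H →L[ℂ] H) {K : ℝ} (hK : 0 ≤ K)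
    (hop : ∀ g : X → H, Summable (fun l : X => ‖g l‖ ^ 2) →
        (∀ k : X, Summable (fun l : X => A k l (g l))) ∧
        Summable (fun k : X => ‖∑' l : X, A k l (g l)‖ ^ 2) ∧
        ∑' k : X, ‖∑' l : X, A k l (g l)‖ ^ 2 ≤ K ^ 2 * ∑' l : X, ‖g l‖ ^ 2)
    (k l : X) : ‖A k l‖ ≤ K := by
  classical
  refine ContinuousLinearMap.opNorm_le_bound _ hK fun v => ?_
  set g : X → H := fun l' => if l' = l then v else 0 with hg
  have hgn : (fun l' : X => ‖g l'‖ ^ 2) = fun l' => if l' = l then ‖v‖ ^ 2 else 0 := by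
    funext l'
    by_cases h : l' = l <;> simp [hg, h]
  have hgs : Summable (fun l' : X => ‖g l'‖ ^ 2) := by
    rw [hgn]
    exact summable_of_ne_finset_zero (s := {l}) (by
      intro b hb
      simp only [Finset.mem_singleton] at hb
      simp [hb])
  obtain ⟨h1, h2, h3⟩ := hop g hgs
  have hAg : ∀ k' : X, (fun l' : X => A k' l' (g l')) = fun l' =>
      if l' = l then A k' l v else 0 := by
    intro k'
    funext l'
    by_cases h : l' = l
    · subst h; simp [hg]
    · simp [hg, h]
  have htsum : ∀ k' : X, ∑' l' : X, A k' l' (g l') = A k' l v := by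
    intro k'
    rw [hAg k']
    exact tsum_ite_eq l (fun _ => A k' l v)
  have hgt : ∑' l' : X, ‖g l'‖ ^ 2 = ‖v‖ ^ 2 := by
    rw [hgn]
    exact tsum_ite_eq l (fun _ => ‖v‖ ^ 2)
  rw [hgt] at h3
  simp only [htsum] at h2 h3
  have hle : ‖A k l v‖ ^ 2 ≤ K ^ 2 * ‖v‖ ^ 2 := by
    refine le_trans ?_ h3
    exact Summable.le_tsum h2 k fun _ _ => sq_nonneg _
  have h4 : ‖A k l v‖ ^ 2 ≤ (K * ‖v‖) ^ 2 := by rw [mul_pow]; exact hle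
  have h5 : (0:ℝ) ≤ K * ‖v‖ := mul_nonneg hK (norm_nonneg _)
  exact (pow_le_pow_iff_left₀ (norm_nonneg _) h5 two_ne_zero).1 h4

set_option maxHeartbeats 1000000 in
theorem stmt18 {d : ℕ} (X : Set (E d)) (hX : RelSep X) (s : ℝ) (hs : (d : ℝ) < s)
    (H : Type*) [NormedAddCommGroup H] [InnerProductSpace ℂ H] [CompleteSpace H] :
    ∃ C > (0 : ℝ), ∀ (A : X → X → H →L[ℂ] H) (M K : ℝ), 0 ≤ M → 0 ≤ K →
      (∀ k l : X, ‖A k l‖ * (1 + ‖(k : E d) - (l : E d)‖) ^ s ≤ M) →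
      (∀ g : X → H, Summable (fun l : X => ‖g l‖ ^ 2) →
        (∀ k : X, Summable (fun l : X => A k l (g l))) ∧
        Summable (fun k : X => ‖∑' l : X, A k l (g l)‖ ^ 2) ∧
        ∑' k : X, ‖∑' l : X, A k l (g l)‖ ^ 2 ≤ K ^ 2 * ∑' l : X, ‖g l‖ ^ 2) →
      ∀ k l : X,
        Summable (fun n : X => (A k n).comp (A n l)) ∧
        ‖∑' n : X, (A k n).comp (A n l)‖ * (1 + ‖(k : E d) - (l : E d)‖) ^ s
          ≤ C * M ^ (2 - (1 - (d : ℝ) / s)) * K ^ (1 - (d : ℝ) / s) := by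
  classical
  obtain ⟨N, hN⟩ := hX
  have hs0 : 0 < s := lt_of_le_of_lt (Nat.cast_nonneg d) hs
  set C₂ : ℝ := (N:ℝ) * 4^d + (N : ℝ) * 8 ^ (d:ℝ) * (1 - (2:ℝ) ^ ((d:ℝ) - s))⁻¹ with hC2
  have hq1 : (2:ℝ) ^ ((d:ℝ) - s) < 1 :=
    Real.rpow_lt_one_of_one_lt_of_neg one_lt_two (by linarith)
  have hinv0 : (0:ℝ) ≤ (1 - (2:ℝ) ^ ((d:ℝ) - s))⁻¹ := by
    apply inv_nonneg.2; linarith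
  have hC2n : 0 ≤ C₂ := by
    have h8 : (0:ℝ) ≤ 8 ^ (d:ℝ) := (Real.rpow_pos_of_pos (by norm_num) _).le
    have h4 : (0:ℝ) ≤ (4:ℝ)^d := by positivity
    have := mul_nonneg (mul_nonneg (Nat.cast_nonneg N : (0:ℝ) ≤ N) h8) hinv0
    have := mul_nonneg (Nat.cast_nonneg N : (0:ℝ) ≤ N) h4
    rw [hC2]; linarith
  have h2s : (0:ℝ) < 2 ^ s := Real.rpow_pos_of_pos two_pos _
  refine ⟨2 ^ s * 2 * C₂ + 1, by nlinarith, ?_⟩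
  intro A M K hM0 hK0 hAM hop k l
  have hKA : ∀ k' l' : X, ‖A k' l'‖ ≤ K := fun k' l' => entry_bound A hK0 hop k' l'
  have hrhs0 : 0 ≤ (2 ^ s * 2 * C₂ + 1) * M ^ (2 - (1 - (d : ℝ) / s)) * K ^ (1 - (d : ℝ) / s) := by
    have h1 : (0:ℝ) ≤ M ^ (2 - (1 - (d : ℝ) / s)) := Real.rpow_nonneg hM0 _
    have h2 : (0:ℝ) ≤ K ^ (1 - (d : ℝ) / s) := Real.rpow_nonneg hK0 _
    have h3 : (0:ℝ) ≤ 2 ^ s * 2 * C₂ + 1 := by nlinarith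
    positivity
  rcases eq_or_lt_of_le hM0 with hM | hM
  · -- M = 0 : A = 0
    have hA0 : ∀ k' l' : X, A k' l' = 0 := by
      intro k' l'
      have h1 : (0:ℝ) < (1 + ‖(k' : E d) - (l' : E d)‖) ^ s :=
        Real.rpow_pos_of_pos (by positivity) _
      have h2 := hAM k' l'
      rw [← hM] at h2
      have h3 : ‖A k' l'‖ ≤ 0 := by nlinarith [norm_nonneg (A k' l')]
      simpa using le_antisymm h3 (norm_nonneg _)
    have hz : (fun n : X => (A k n).comp (A n l)) = fun _ => 0 := by
      funext n; rw [hA0 k n]; simp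
    refine ⟨by rw [hz]; exact summable_zero, ?_⟩
    rw [hz, tsum_zero]
    simpa using hrhs0
  rcases eq_or_lt_of_le hK0 with hK | hK
  · -- K = 0 : A = 0
    have hA0 : ∀ k' l' : X, A k' l' = 0 := by
      intro k' l'
      have := hKA k' l'
      rw [← hK] at this
      simpa using le_antisymm this (norm_nonneg _)
    have hz : (fun n : X => (A k n).comp (A n l)) = fun _ => 0 := by
      funext n; rw [hA0 k n]; simp
    refine ⟨by rw [hz]; exact summable_zero, ?_⟩
    rw [hz, tsum_zero]
    simpa using hrhs0
  -- main case : 0 < M, 0 < K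
  set D : ℝ := ‖(k : E d) - (l : E d)‖ with hD
  have hD0 : 0 ≤ D := norm_nonneg _
  have h1D : (0:ℝ) < 1 + D := by linarith
  have hA1 : ∀ k' l' : X, ‖A k' l'‖ ≤ M * (1 + ‖(k' : E d) - (l' : E d)‖) ^ (-s) := by
    intro k' l'
    have hb : (0:ℝ) < 1 + ‖(k' : E d) - (l' : E d)‖ := by positivity
    have hp : (0:ℝ) < (1 + ‖(k' : E d) - (l' : E d)‖) ^ s := Real.rpow_pos_of_pos hb _
    have h2 := hAM k' l'
    rw [Real.rpow_neg hb.le, ← div_eq_mul_inv]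
    exact (le_div_iff₀ hp).2 h2
  have hAmin : ∀ k' l' : X,
      ‖A k' l'‖ ≤ min K (M * (1 + ‖(k' : E d) - (l' : E d)‖) ^ (-s)) :=
    fun k' l' => le_min (hKA k' l') (hA1 k' l')
  set f1 : X → ℝ := fun n => min K (M * (1 + ‖(n : E d) - (l : E d)‖) ^ (-s)) with hf1
  set f2 : X → ℝ := fun n => min K (M * (1 + ‖(n : E d) - (k : E d)‖) ^ (-s)) with hf2
  have hf1fact := min_sum hN hs ((l : E d)) hK hM
  have hf2fact := min_sum hN hs ((k : E d)) hK hM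
  have hf1n : ∀ n, 0 ≤ f1 n := by
    intro n; refine le_min hK.le ?_
    have : (0:ℝ) < 1 + ‖(n : E d) - (l : E d)‖ := by positivity
    positivity
  have hf2n : ∀ n, 0 ≤ f2 n := by
    intro n; refine le_min hK.le ?_
    have : (0:ℝ) < 1 + ‖(n : E d) - (k : E d)‖ := by positivity
    positivity
  have hco : (0:ℝ) ≤ M * 2 ^ s * (1 + D) ^ (-s) :=
    mul_nonneg (mul_nonneg hM.le h2s.le) (Real.rpow_nonneg h1D.le _)
  have hco2 : (0:ℝ) ≤ M * (2 ^ s * (1 + D) ^ (-s)) :=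
    mul_nonneg hM.le (mul_nonneg h2s.le (Real.rpow_nonneg h1D.le _))
  have hhalf : ((1 + D)/2) ^ (-s) = 2 ^ s * (1 + D) ^ (-s) := by
    rw [Real.div_rpow h1D.le two_pos.le, Real.rpow_neg two_pos.le, div_eq_mul_inv,
      inv_inv]
    ring
  have key : ∀ n : X, ‖(A k n).comp (A n l)‖
      ≤ M * 2 ^ s * (1 + D) ^ (-s) * (f1 n + f2 n) := by
    intro n
    have hcomp : ‖(A k n).comp (A n l)‖ ≤ ‖A k n‖ * ‖A n l‖ :=
      ContinuousLinearMap.opNorm_comp_le _ _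
    rcases le_or_gt D (2 * ‖(k : E d) - (n : E d)‖) with h | h
    · have hb : (1 + D)/2 ≤ 1 + ‖(k : E d) - (n : E d)‖ := by linarith
      have h2 : (1 + ‖(k : E d) - (n : E d)‖) ^ (-s) ≤ ((1 + D)/2) ^ (-s) :=
        Real.rpow_le_rpow_of_nonpos (by positivity) hb (by linarith)
      have h3 : ‖A k n‖ ≤ M * (2 ^ s * (1 + D) ^ (-s)) := by
        calc ‖A k n‖ ≤ M * (1 + ‖(k : E d) - (n : E d)‖) ^ (-s) := hA1 k n
          _ ≤ M * (2 ^ s * (1 + D) ^ (-s)) := by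
              rw [← hhalf]; exact mul_le_mul_of_nonneg_left h2 hM.le
      have h4 : ‖A n l‖ ≤ f1 n := hAmin n l
      calc ‖(A k n).comp (A n l)‖ ≤ ‖A k n‖ * ‖A n l‖ := hcomp
        _ ≤ (M * (2 ^ s * (1 + D) ^ (-s))) * f1 n :=
            mul_le_mul h3 h4 (norm_nonneg _) hco2
        _ ≤ M * 2 ^ s * (1 + D) ^ (-s) * (f1 n + f2 n) := by
            have := mul_nonneg hco (hf2n n)
            nlinarith [hf1n n]
    · have htri : D ≤ ‖(k : E d) - (n : E d)‖ + ‖(n : E d) - (l : E d)‖ := by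
        have heq : ((k : E d) - (n : E d)) + ((n : E d) - (l : E d)) = (k : E d) - (l : E d) :=
          sub_add_sub_cancel ((k : E d)) ((n : E d)) ((l : E d))
        rw [hD, ← heq]
        exact norm_add_le _ _
      have hb : (1 + D)/2 ≤ 1 + ‖(n : E d) - (l : E d)‖ := by linarith
      have h2 : (1 + ‖(n : E d) - (l : E d)‖) ^ (-s) ≤ ((1 + D)/2) ^ (-s) :=
        Real.rpow_le_rpow_of_nonpos (by positivity) hb (by linarith)
      have h3 : ‖A n l‖ ≤ M * (2 ^ s * (1 + D) ^ (-s)) := by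
        calc ‖A n l‖ ≤ M * (1 + ‖(n : E d) - (l : E d)‖) ^ (-s) := hA1 n l
          _ ≤ M * (2 ^ s * (1 + D) ^ (-s)) := by
              rw [← hhalf]; exact mul_le_mul_of_nonneg_left h2 hM.le
      have h4 : ‖A k n‖ ≤ f2 n := by
        have := hAmin k n
        rwa [norm_sub_rev] at this
      calc ‖(A k n).comp (A n l)‖ ≤ ‖A k n‖ * ‖A n l‖ := hcomp
        _ ≤ f2 n * (M * (2 ^ s * (1 + D) ^ (-s))) :=
            mul_le_mul h4 h3 (norm_nonneg _) (hf2n n)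
        _ ≤ M * 2 ^ s * (1 + D) ^ (-s) * (f1 n + f2 n) := by
            have := mul_nonneg hco (hf1n n)
            nlinarith [hf2n n]
  have hgsum : Summable (fun n : X => M * 2 ^ s * (1 + D) ^ (-s) * (f1 n + f2 n)) :=
    (hf1fact.1.add hf2fact.1).mul_left _
  have hcompsum : Summable (fun n : X => (A k n).comp (A n l)) :=
    Summable.of_norm_bounded hgsum key
  refine ⟨hcompsum, ?_⟩
  have hnormsum : Summable (fun n : X => ‖(A k n).comp (A n l)‖) :=
    Summable.of_nonneg_of_le (fun n => norm_nonneg _) key hgsum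
  have hT : ‖∑' n : X, (A k n).comp (A n l)‖
      ≤ M * 2 ^ s * (1 + D) ^ (-s) * ((∑' n : X, f1 n) + (∑' n : X, f2 n)) := by
    calc ‖∑' n : X, (A k n).comp (A n l)‖ ≤ ∑' n : X, ‖(A k n).comp (A n l)‖ :=
          norm_tsum_le_tsum_norm hnormsum
      _ ≤ ∑' n : X, M * 2 ^ s * (1 + D) ^ (-s) * (f1 n + f2 n) :=
          Summable.tsum_le_tsum key hnormsum hgsum
      _ = M * 2 ^ s * (1 + D) ^ (-s) * ((∑' n : X, f1 n) + (∑' n : X, f2 n)) := by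
          rw [tsum_mul_left, Summable.tsum_add hf1fact.1 hf2fact.1]
  set R : ℝ := M ^ ((d:ℝ)/s) * K ^ (1 - (d:ℝ)/s) with hR
  have hR0 : 0 ≤ R := mul_nonneg (Real.rpow_nonneg hM0 _) (Real.rpow_nonneg hK0 _)
  have hTsum : (∑' n : X, f1 n) + (∑' n : X, f2 n) ≤ 2 * (C₂ * R) := by
    have h1 : (∑' n : X, f1 n) ≤ C₂ * R := hf1fact.2
    have h2 : (∑' n : X, f2 n) ≤ C₂ * R := hf2fact.2
    linarith
  have hcancel : (1 + D) ^ (-s) * (1 + D) ^ s = 1 := by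
    rw [← Real.rpow_add h1D]
    simp
  have hmain : ‖∑' n : X, (A k n).comp (A n l)‖ * (1 + D) ^ s
      ≤ M * 2 ^ s * (2 * (C₂ * R)) := by
    have hps : (0:ℝ) ≤ (1 + D) ^ s := (Real.rpow_pos_of_pos h1D _).le
    calc ‖∑' n : X, (A k n).comp (A n l)‖ * (1 + D) ^ s
        ≤ (M * 2 ^ s * (1 + D) ^ (-s) * ((∑' n : X, f1 n) + (∑' n : X, f2 n))) * (1 + D) ^ s :=
          mul_le_mul_of_nonneg_right hT hps
      _ = M * 2 ^ s * ((∑' n : X, f1 n) + (∑' n : X, f2 n)) * ((1 + D) ^ (-s) * (1 + D) ^ s) := by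
          ring
      _ = M * 2 ^ s * ((∑' n : X, f1 n) + (∑' n : X, f2 n)) := by
          rw [hcancel, mul_one]
      _ ≤ M * 2 ^ s * (2 * (C₂ * R)) := by
          have hc0 : (0:ℝ) ≤ M * 2 ^ s := by positivity
          exact mul_le_mul_of_nonneg_left hTsum hc0
  have hfinal : M * 2 ^ s * (2 * (C₂ * R)) ≤
      (2 ^ s * 2 * C₂ + 1) * M ^ (2 - (1 - (d : ℝ) / s)) * K ^ (1 - (d : ℝ) / s) := by
    have hexp : (2:ℝ) - (1 - (d:ℝ)/s) = 1 + (d:ℝ)/s := by ring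
    have hM1 : M * M ^ ((d:ℝ)/s) = M ^ (2 - (1 - (d:ℝ)/s)) := by
      rw [hexp, Real.rpow_add hM, Real.rpow_one]
    have heq : M * 2 ^ s * (2 * (C₂ * R))
        = (2 ^ s * 2 * C₂) * (M ^ (2 - (1 - (d:ℝ)/s)) * K ^ (1 - (d:ℝ)/s)) := by
      rw [hR, ← hM1]; ring
    rw [heq]
    have hnn : 0 ≤ M ^ (2 - (1 - (d:ℝ)/s)) * K ^ (1 - (d:ℝ)/s) :=
      mul_nonneg (Real.rpow_nonneg hM0 _) (Real.rpow_nonneg hK0 _)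
    calc (2 ^ s * 2 * C₂) * (M ^ (2 - (1 - (d:ℝ)/s)) * K ^ (1 - (d:ℝ)/s))
        ≤ (2 ^ s * 2 * C₂ + 1) * (M ^ (2 - (1 - (d:ℝ)/s)) * K ^ (1 - (d:ℝ)/s)) :=
          mul_le_mul_of_nonneg_right (by linarith) hnn
      _ = (2 ^ s * 2 * C₂ + 1) * M ^ (2 - (1 - (d:ℝ)/s)) * K ^ (1 - (d:ℝ)/s) := by ring
  exact hmain.trans hfinal
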